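/- Let V be a finite-dimensional real inner product space and R : Λ²V → Λ²V a self-adjoint linear map satisfying the first Bianchi identity: R(X∧Y)Z + R(Y∧Z)X + R(Z∧X)Y = 0 for all X,Y,Z ∈ V (identifying Λ²V with anti-symmetric endomorphisms). Suppose V = ⊕ᵢ Vᵢ is an orthogonal decomposition such that each Vᵢ is invariant under every endomorphism in the image of R. Then R(X∧Y) = 0 whenever X ∈ Vᵢ, Y ∈ Vⱼ with i ≠ j. -/
import Mathlib


open scoped RealInnerProductSpace BigOperators

/-- Let `R` be an algebraic curvature operator (written as the bilinear map
`(X, Y) ↦ R(X∧Y)` with values in anti-symmetric endomorphisms, self-adjoint as an operator on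
`Λ²V`, i.e. pair-symmetric, and satisfying the first Bianchi identity).  If `V = ⊕ᵢ Vᵢ` is an
orthogonal decomposition with each `Vᵢ` invariant under every endomorphism in the image of `R`,
then `R(X∧Y) = 0` whenever `X ∈ Vᵢ`, `Y ∈ Vⱼ` with `i ≠ j`. -/
theorem curvature_operator_offdiagonal_vanishes
    {V : Type*} [NormedAddCommGroup V] [InnerProductSpace ℝ V] [FiniteDimensional ℝ V]
    {ι : Type*} (Vs : ι → Submodule ℝ V)
    (R : V →ₗ[ℝ] V →ₗ[ℝ] (V →ₗ[ℝ] V))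
    (halt : ∀ X Y : V, R X Y = -R Y X)
    (hskew : ∀ X Y : V, LinearMap.adjoint (R X Y) = -(R X Y))
    (hpair : ∀ X Y Z W : V, ⟪R X Y Z, W⟫ = ⟪R Z W X, Y⟫)
    (hbianchi : ∀ X Y Z : V, R X Y Z + R Y Z X + R Z X Y = 0)
    (hortho : ∀ i j, i ≠ j → ∀ x ∈ Vs i, ∀ y ∈ Vs j, ⟪x, y⟫ = 0)
    (hspan : (⨆ i, Vs i) = ⊤)
    (hinv : ∀ i (X Y : V), (Vs i).map (R X Y) ≤ Vs i)
    {i j : ι} (hij : i ≠ j) {X Y : V} (hX : X ∈ Vs i) (hY : Y ∈ Vs j) :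
    R X Y = 0 := by
  ext Z
  refine ext_inner_right ℝ fun W => ?_
  rw [LinearMap.zero_apply, inner_zero_left, hpair]
  exact hortho i j hij _ (hinv i Z W ⟨X, hX, rfl⟩) Y hY
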